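/- arXiv:2110.07290 — 5 statements merged into one kernel-verified Lean document; each statement's English description precedes it below -/
import Mathlib

section
/- Let B ⊆ ℝ^(n+1) be compact, strictly convex, with non-empty interior, let v be a unit vector, and let D_v^0 be the set of points of B projecting via p_v (orthogonal projection onto v^⊥) to the boundary of p_v(B). Then the restriction of p_v to D_v^0 is a homeomorphism onto ∂(p_v(B)). -/
open Metric Set
open scoped RealInnerProductSpace

/-- Orthogonal projection of `ℝ^{n+1}` onto the hyperplane orthogonal to `v`. -/
noncomputable def pv {n : ℕ} (v : EuclideanSpace ℝ (Fin (n + 1))) :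
    EuclideanSpace ℝ (Fin (n + 1)) →L[ℝ] ↥((ℝ ∙ v)ᗮ) :=
  Submodule.orthogonalProjectionOnto (ℝ ∙ v)ᗮ

/-- `B` is strictly convex: every open segment between two distinct points of `B`
lies in the interior of `B`. -/
def StrictlyConvexSet {V : Type*} [AddCommGroup V] [Module ℝ V] [TopologicalSpace V]
    (B : Set V) : Prop :=
  ∀ x ∈ B, ∀ y ∈ B, x ≠ y → openSegment ℝ x y ⊆ interior B

/-- Points of `B` projecting to the boundary of `p_v(B)`. -/
def D0 {n : ℕ} (B : Set (EuclideanSpace ℝ (Fin (n + 1)))) (v : EuclideanSpace ℝ (Fin (n + 1))) :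
    Set (EuclideanSpace ℝ (Fin (n + 1))) :=
  {x ∈ B | pv v x ∈ frontier (pv v '' B)}

/-- Upper region of `S = ∂B`: points over the interior of `p_v(B)` maximizing `x·v` on the fiber. -/
def Uplus {n : ℕ} (B : Set (EuclideanSpace ℝ (Fin (n + 1)))) (v : EuclideanSpace ℝ (Fin (n + 1))) :
    Set (EuclideanSpace ℝ (Fin (n + 1))) :=
  {x | x ∈ frontier B ∧ pv v x ∈ interior (pv v '' B) ∧
    ∀ y ∈ B, pv v y = pv v x → ⟪y, v⟫ ≤ ⟪x, v⟫}

/-- Lower region of `S = ∂B`: points over the interior of `p_v(B)` minimizing `x·v` on the fiber. -/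
def Uminus {n : ℕ} (B : Set (EuclideanSpace ℝ (Fin (n + 1)))) (v : EuclideanSpace ℝ (Fin (n + 1))) :
    Set (EuclideanSpace ℝ (Fin (n + 1))) :=
  {x | x ∈ frontier B ∧ pv v x ∈ interior (pv v '' B) ∧
    ∀ y ∈ B, pv v y = pv v x → ⟪x, v⟫ ≤ ⟪y, v⟫}

def Dplus {n : ℕ} (B : Set (EuclideanSpace ℝ (Fin (n + 1)))) (v : EuclideanSpace ℝ (Fin (n + 1))) :
    Set (EuclideanSpace ℝ (Fin (n + 1))) := D0 B v ∪ Uplus B v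

def Dminus {n : ℕ} (B : Set (EuclideanSpace ℝ (Fin (n + 1)))) (v : EuclideanSpace ℝ (Fin (n + 1))) :
    Set (EuclideanSpace ℝ (Fin (n + 1))) := D0 B v ∪ Uminus B v

/-- The median of `S` in direction `v`: midpoints of fiber pairs. -/
def median {n : ℕ} (B : Set (EuclideanSpace ℝ (Fin (n + 1)))) (v : EuclideanSpace ℝ (Fin (n + 1))) :
    Set (EuclideanSpace ℝ (Fin (n + 1))) :=
  {z | ∃ xp ∈ Dplus B v, ∃ xm ∈ Dminus B v, pv v xp = pv v xm ∧ z = midpoint ℝ xp xm}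

theorem stmt3 (n : ℕ) (B : Set (EuclideanSpace ℝ (Fin (n + 1))))
    (hBc : IsCompact B) (hBsc : StrictlyConvexSet B) (hBint : (interior B).Nonempty)
    (v : EuclideanSpace ℝ (Fin (n + 1))) (hv : ‖v‖ = 1) :
    ∃ h : D0 B v ≃ₜ (frontier (pv v '' B)),
      ∀ x : D0 B v, (h x : ↥((ℝ ∙ v)ᗮ)) = pv v (x : EuclideanSpace ℝ (Fin (n + 1))) := by
  have hsurj : Function.Surjective ⇑(pv v) := fun w =>
    ⟨(w : EuclideanSpace ℝ (Fin (n + 1))), Submodule.orthogonalProjectionOnto_mem_subspace_eq_self w⟩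
  have hopen : IsOpenMap ⇑(pv v) := (pv v).isOpenMap hsurj
  have him : IsCompact (pv v '' B) := hBc.image (pv v).continuous
  -- D0 is compact
  have hD0eq : D0 B v = B ∩ (pv v) ⁻¹' (frontier (pv v '' B)) := rfl
  have hD0c : IsCompact (D0 B v) := by
    rw [hD0eq]
    exact hBc.inter_right (isClosed_frontier.preimage (pv v).continuous)
  haveI : CompactSpace (D0 B v) := isCompact_iff_compactSpace.mp hD0c
  -- the map
  set f : D0 B v → (frontier (pv v '' B)) := fun x => ⟨pv v (x : _), x.2.2⟩ with hf
  have hfc : Continuous f :=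
    Continuous.subtype_mk ((pv v).continuous.comp continuous_subtype_val) _
  have hinj : Function.Injective f := by
    rintro ⟨x, hxB, hxf⟩ ⟨y, hyB, hyf⟩ hxy
    have hxy' : pv v x = pv v y := congrArg Subtype.val hxy
    by_contra hne
    have hne' : x ≠ y := fun h => hne (by subst h; rfl)
    have hmid : midpoint ℝ x y ∈ interior B := by
      apply hBsc x hxB y hyB hne'
      refine ⟨1/2, 1/2, by norm_num, by norm_num, by norm_num, ?_⟩
      rw [midpoint_eq_smul_add]
      norm_num
    have hpmid : pv v (midpoint ℝ x y) = pv v x := by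
      rw [midpoint_eq_smul_add, map_smul, map_add, hxy', ← two_smul ℝ, smul_smul]
      norm_num
    have : pv v x ∈ interior (pv v '' B) := by
      rw [← hpmid]
      exact hopen.image_interior_subset B ⟨_, hmid, rfl⟩
    exact hxf.2 this
  have hsurjf : Function.Surjective f := by
    rintro ⟨w, hw⟩
    have : w ∈ pv v '' B := him.isClosed.frontier_subset hw
    obtain ⟨x, hxB, hxw⟩ := this
    exact ⟨⟨x, hxB, hxw ▸ hw⟩, Subtype.ext hxw⟩
  let e : D0 B v ≃ (frontier (pv v '' B)) := Equiv.ofBijective f ⟨hinj, hsurjf⟩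
  exact ⟨Continuous.homeoOfEquivCompactToT2 (f := e) hfc, fun x => rfl⟩
end

section
/- Let B ⊆ ℝ^(n+1) be compact, strictly convex, with non-empty interior, v a unit vector, and S = ∂B. For every y in the interior of p_v(B), the fiber p_v^{-1}(y) ∩ S consists of exactly two distinct points. -/
open Metric Set
open scoped RealInnerProductSpace

section aux

variable {n : ℕ} {v : EuclideanSpace ℝ (Fin (n + 1))}

lemma pv_shift (x : EuclideanSpace ℝ (Fin (n + 1))) (t : ℝ) :
    pv v (x + t • v) = pv v x := by
  have hmem : t • v ∈ ((ℝ ∙ v)ᗮ)ᗮ :=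
    (ℝ ∙ v).le_orthogonal_orthogonal
      (Submodule.smul_mem _ t (Submodule.mem_span_singleton_self v))
  have h0 : pv v (t • v) = 0 :=
    Submodule.orthogonalProjectionOnto_apply_of_mem_orthogonal hmem
  rw [map_add, h0, add_zero]

lemma pv_eq (hv : ‖v‖ = 1) (x x' : EuclideanSpace ℝ (Fin (n + 1)))
    (h : pv v x = pv v x') : x = x' + ⟪x - x', v⟫ • v := by
  have h0 : pv v (x - x') = 0 := by
    rw [map_sub, h, sub_self]
  have hmem : x - x' ∈ ((ℝ ∙ v)ᗮ)ᗮ := Submodule.orthogonalProjectionOnto_eq_zero_iff.mp h0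
  rw [Submodule.orthogonal_orthogonal] at hmem
  obtain ⟨t, ht⟩ := Submodule.mem_span_singleton.mp hmem
  have hinner : ⟪x - x', v⟫ = t := by
    rw [← ht, real_inner_smul_left, real_inner_self_eq_norm_sq, hv]; ring
  rw [hinner, ht]; abel

lemma interior_move {B : Set (EuclideanSpace ℝ (Fin (n + 1)))} (hv : ‖v‖ = 1)
    {z : EuclideanSpace ℝ (Fin (n + 1))} (hz : z ∈ interior B) :
    ∃ ε : ℝ, 0 < ε ∧ z + ε • v ∈ B ∧ z + (-ε) • v ∈ B := by
  obtain ⟨r, hr, hball⟩ := Metric.isOpen_iff.mp isOpen_interior z hz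
  refine ⟨r / 2, by positivity, ?_, ?_⟩ <;>
  · refine interior_subset (hball ?_)
    simp only [mem_ball, dist_eq_norm, add_sub_cancel_left, norm_smul, hv, mul_one,
      norm_neg, Real.norm_eq_abs]
    rw [abs_of_pos (by positivity)] <;> linarith

end aux

theorem stmt4 (n : ℕ) (B : Set (EuclideanSpace ℝ (Fin (n + 1))))
    (hBc : IsCompact B) (hBsc : StrictlyConvexSet B) (hBint : (interior B).Nonempty)
    (v : EuclideanSpace ℝ (Fin (n + 1))) (hv : ‖v‖ = 1)
    (y : ↥((ℝ ∙ v)ᗮ)) (hy : y ∈ interior (pv v '' B)) :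
    ∃ x₁ x₂ : EuclideanSpace ℝ (Fin (n + 1)), x₁ ≠ x₂ ∧
      {x | x ∈ frontier B ∧ pv v x = y} = {x₁, x₂} := by
  classical
  set f : EuclideanSpace ℝ (Fin (n + 1)) → ℝ := fun x => ⟪x, v⟫ with hf
  have hfc : Continuous f := continuous_id.inner continuous_const
  set F : Set (EuclideanSpace ℝ (Fin (n + 1))) := {x | x ∈ B ∧ pv v x = y} with hF
  have hFc : IsCompact F := by
    have hFeq : F = B ∩ pv v ⁻¹' {y} := by ext x; simp [hF]
    rw [hFeq]
    exact hBc.inter_right (isClosed_singleton.preimage (pv v).continuous)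
  have hfz : ∀ (x : EuclideanSpace ℝ (Fin (n + 1))) (t : ℝ), f (x + t • v) = f x + t := by
    intro x t
    simp only [hf]
    rw [inner_add_left, real_inner_smul_left, real_inner_self_eq_norm_sq, hv]
    ring
  -- interior point on the fiber
  have hzex : ∃ z ∈ interior B, pv v z = y := by
    obtain ⟨c, hc⟩ := hBint
    by_cases hcy : pv v c = y
    · exact ⟨c, hc, hcy⟩
    · obtain ⟨r, hr, hball⟩ := Metric.isOpen_iff.mp isOpen_interior y hy
      have hyc : (0 : ℝ) < ‖y - pv v c‖ :=
        norm_pos_iff.mpr (sub_ne_zero.mpr (Ne.symm hcy))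
      set δ : ℝ := r / (2 * ‖y - pv v c‖) with hδ
      have hδ0 : 0 < δ := by positivity
      have hy' : y + δ • (y - pv v c) ∈ pv v '' B := by
        refine interior_subset (hball ?_)
        have hkey : δ * ‖y - pv v c‖ = r / 2 := by
          rw [hδ, div_mul_eq_mul_div, mul_comm 2 ‖y - pv v c‖, ← div_div,
            mul_div_assoc, div_self (ne_of_gt hyc), mul_one]
        simp only [mem_ball, dist_eq_norm, add_sub_cancel_left, norm_smul,
          Real.norm_eq_abs, abs_of_pos hδ0, hkey]
        linarith
      obtain ⟨b, hbB, hb⟩ := hy'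
      have hcb : c ≠ b := by
        rintro rfl
        have hb' : pv v c - y = δ • (y - pv v c) := by
          conv_lhs => rw [hb]
          abel
        have hw3 : (1 + δ) • (y - pv v c) = 0 := by
          calc (1 + δ) • (y - pv v c)
              = (y - pv v c) + δ • (y - pv v c) := by rw [add_smul, one_smul]
            _ = (y - pv v c) + (pv v c - y) := by rw [← hb']
            _ = 0 := by abel
        rcases smul_eq_zero.mp hw3 with h | h
        · linarith
        · exact hcy ((sub_eq_zero.mp h).symm)
      set a : ℝ := δ / (1 + δ) with ha
      have h1δ : (0:ℝ) < 1 + δ := by linarith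
      have ha0 : 0 < a := by positivity
      have ha1 : a < 1 := by rw [ha, div_lt_one h1δ]; linarith
      refine ⟨a • c + (1 - a) • b, hBsc c (interior_subset hc) b hbB hcb
        ⟨a, 1 - a, ha0, by linarith, by ring, rfl⟩, ?_⟩
      have hlin : pv v (a • c + (1 - a) • b) = a • pv v c + (1 - a) • pv v b := by
        rw [map_add, ContinuousLinearMap.map_smul, ContinuousLinearMap.map_smul]
      rw [hlin, hb]
      have h2 : (1 - a) * δ = a := by rw [ha]; field_simp; ring
      calc a • pv v c + (1 - a) • (y + δ • (y - pv v c))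
          = ((1 - a) + (1 - a) * δ) • y + (a - (1 - a) * δ) • pv v c := by module
        _ = ((1 - a) + a) • y + (a - a) • pv v c := by rw [h2]
        _ = y := by module
  obtain ⟨z, hz, hzy⟩ := hzex
  obtain ⟨ε, hε, hzp, hzm⟩ := interior_move hv hz
  have hFne : F.Nonempty := ⟨z, interior_subset hz, hzy⟩
  obtain ⟨x₁, hx₁F, hmax⟩ := hFc.exists_isMaxOn hFne hfc.continuousOn
  obtain ⟨x₂, hx₂F, hmin⟩ := hFc.exists_isMinOn hFne hfc.continuousOn
  have hzpF : z + ε • v ∈ F := ⟨hzp, by rw [pv_shift, hzy]⟩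
  have hzmF : z + (-ε) • v ∈ F := ⟨hzm, by rw [pv_shift, hzy]⟩
  have hgap : f x₂ < f x₁ := by
    have h1 : f (z + ε • v) ≤ f x₁ := hmax hzpF
    have h2 : f x₂ ≤ f (z + (-ε) • v) := hmin hzmF
    rw [hfz] at h1 h2
    linarith
  have hBclosed : IsClosed B := hBc.isClosed
  have hfr : ∀ x ∈ F, (IsMaxOn f F x ∨ IsMinOn f F x) → x ∈ frontier B := by
    intro x hxF hopt
    rw [hBclosed.frontier_eq]
    refine ⟨hxF.1, fun hxint => ?_⟩
    obtain ⟨ε', hε', hp, hm⟩ := interior_move hv hxint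
    rcases hopt with hopt | hopt
    · have h1 : f (x + ε' • v) ≤ f x := hopt (⟨hp, by rw [pv_shift]; exact hxF.2⟩ : (x + ε' • v) ∈ F)
      rw [hfz] at h1
      linarith
    · have h1 : f x ≤ f (x + (-ε') • v) := hopt (⟨hm, by rw [pv_shift]; exact hxF.2⟩ : (x + (-ε') • v) ∈ F)
      rw [hfz] at h1
      linarith
  have hx₁fr : x₁ ∈ frontier B := hfr x₁ hx₁F (Or.inl hmax)
  have hx₂fr : x₂ ∈ frontier B := hfr x₂ hx₂F (Or.inr hmin)
  refine ⟨x₁, x₂, fun h => by rw [h] at hgap; exact lt_irrefl _ hgap, ?_⟩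
  ext x
  simp only [mem_setOf_eq, mem_insert_iff, mem_singleton_iff]
  constructor
  · rintro ⟨hxfr, hxy⟩
    have hxB : x ∈ B := by rw [hBclosed.frontier_eq] at hxfr; exact hxfr.1
    have hxF : x ∈ F := ⟨hxB, hxy⟩
    have h1 : f x ≤ f x₁ := hmax hxF
    have h2 : f x₂ ≤ f x := hmin hxF
    have hx : x = x₂ + ⟪x - x₂, v⟫ • v := pv_eq hv x x₂ (by rw [hxy, hx₂F.2])
    have hx1 : x₁ = x₂ + ⟪x₁ - x₂, v⟫ • v := pv_eq hv x₁ x₂ (by rw [hx₁F.2, hx₂F.2])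
    set t : ℝ := ⟪x - x₂, v⟫ with ht
    set T : ℝ := ⟪x₁ - x₂, v⟫ with hT
    have htf : t = f x - f x₂ := by rw [ht, hf]; simp [inner_sub_left]
    have hTf : T = f x₁ - f x₂ := by rw [hT, hf]; simp [inner_sub_left]
    have hT0 : 0 < T := by rw [hTf]; linarith
    have ht0 : 0 ≤ t := by rw [htf]; linarith
    have htT : t ≤ T := by rw [htf, hTf]; linarith
    rcases eq_or_lt_of_le ht0 with h0 | h0
    · right; rw [hx, ← h0]; simp
    rcases eq_or_lt_of_le htT with hTeq | hTlt
    · left; rw [hx, hx1, hTeq]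
    -- strictly between: contradiction with frontier
    exfalso
    have hseg : x ∈ openSegment ℝ x₂ x₁ := by
      refine ⟨1 - t / T, t / T, by
        rw [sub_pos, div_lt_one hT0]; exact hTlt, by positivity, by ring, ?_⟩
      rw [hx, hx1]
      have h3 : t / T * T = t := div_mul_cancel₀ _ (ne_of_gt hT0)
      have h4 : (1 - t / T) + t / T = 1 := by ring
      calc (1 - t / T) • x₂ + (t / T) • (x₂ + T • v)
          = ((1 - t / T) + t / T) • x₂ + (t / T * T) • v := by module
        _ = x₂ + t • v := by rw [h3, h4, one_smul]
    have hxint : x ∈ interior B :=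
      hBsc x₂ (by rw [hBclosed.frontier_eq] at hx₂fr; exact hx₂fr.1) x₁
        (by rw [hBclosed.frontier_eq] at hx₁fr; exact hx₁fr.1)
        (fun h => by rw [h] at hgap; exact lt_irrefl _ hgap) hseg
    rw [hBclosed.frontier_eq] at hxfr
    exact hxfr.2 hxint
  · rintro (rfl | rfl)
    · exact ⟨hx₁fr, hx₁F.2⟩
    · exact ⟨hx₂fr, hx₂F.2⟩
end

section
/- Let B ⊆ ℝ^(n+1) be compact, strictly convex, with non-empty interior, v a unit vector, S = ∂B. Define U_v^+ (resp. U_v^-) as the set of points x ∈ S with p_v(x) in the interior of p_v(B) and x·v maximal (resp. minimal) on the fiber p_v^{-1}(p_v(x)) ∩ B. Then U_v^+ and U_v^- are disjoint open subsets of S. -/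
open Metric Set
open scoped RealInnerProductSpace

section AuxStmt5

variable {n : ℕ} {v : EuclideanSpace ℝ (Fin (n + 1))}

lemma inner_orth_v (w : ((ℝ ∙ v)ᗮ : Submodule ℝ (EuclideanSpace ℝ (Fin (n+1))))) :
    ⟪(w : EuclideanSpace ℝ (Fin (n+1))), v⟫ = 0 := by
  have h := w.2
  rw [Submodule.mem_orthogonal] at h
  have := h v (Submodule.mem_span_singleton_self v)
  rwa [real_inner_comm] at this

lemma pv_smul_v (t : ℝ) : pv v (t • v) = 0 := by
  rw [pv, Submodule.orthogonalProjectionOnto_eq_zero_iff]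
  exact Submodule.smul_mem _ _
    (Submodule.le_orthogonal_orthogonal _ (Submodule.mem_span_singleton_self v))

lemma pv_coe (w : ((ℝ ∙ v)ᗮ : Submodule ℝ (EuclideanSpace ℝ (Fin (n+1))))) :
    pv v (w : EuclideanSpace ℝ (Fin (n+1))) = w := by
  rw [pv]; exact Submodule.orthogonalProjectionOnto_mem_subspace_eq_self w

lemma fiber_sub (hv : ‖v‖ = 1) {x y : EuclideanSpace ℝ (Fin (n+1))}
    (h : pv v y = pv v x) : y - x = (⟪y, v⟫ - ⟪x, v⟫) • v := by
  have h0 : pv v (y - x) = 0 := by rw [map_sub, h, sub_self]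
  rw [pv, Submodule.orthogonalProjectionOnto_eq_zero_iff, Submodule.orthogonal_orthogonal,
    Submodule.mem_span_singleton] at h0
  obtain ⟨s, hs⟩ := h0
  have : ⟪y - x, v⟫ = s := by
    rw [← hs, real_inner_smul_left, real_inner_self_eq_norm_sq, hv]; ring
  rw [inner_sub_left] at this
  rw [← hs, ← this]

lemma convex_of_strict {V : Type*} [AddCommGroup V] [Module ℝ V] [TopologicalSpace V]
    {B : Set V} (h : StrictlyConvexSet B) : Convex ℝ B := by
  rw [convex_iff_segment_subset]
  intro x hx y hy
  rcases eq_or_ne x y with rfl | hxy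
  · rw [segment_same]; exact singleton_subset_iff.mpr hx
  · rw [← insert_endpoints_openSegment]
    intro z hz
    rcases hz with rfl | rfl | hz
    · exact hx
    · exact hy
    · exact interior_subset (h x hx y hy hxy hz)

lemma mem_interior_of_between {B : Set (EuclideanSpace ℝ (Fin (n+1)))}
    (hBsc : StrictlyConvexSet B) (hv : ‖v‖ = 1)
    {x u y : EuclideanSpace ℝ (Fin (n+1))} (hu : u ∈ B) (hy : y ∈ B)
    (hux : pv v u = pv v x) (hyx : pv v y = pv v x)
    (h1 : ⟪u, v⟫ < ⟪x, v⟫) (h2 : ⟪x, v⟫ < ⟪y, v⟫) : x ∈ interior B := by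
  have hne : (⟪y, v⟫ : ℝ) - ⟪u, v⟫ ≠ 0 := by intro h; linarith [h]
  set t : ℝ := (⟪x, v⟫ - ⟪u, v⟫) / (⟪y, v⟫ - ⟪u, v⟫) with ht
  have ht0 : 0 < t := by
    apply div_pos <;> linarith
  have ht1 : t < 1 := by
    rw [div_lt_one (by linarith)]; linarith
  have huy : u ≠ y := by
    intro h; rw [h] at h1; linarith
  have hyu : y - u = (⟪y, v⟫ - ⟪u, v⟫) • v := fiber_sub hv (hyx.trans hux.symm)
  have hxu : x - u = (⟪x, v⟫ - ⟪u, v⟫) • v := fiber_sub hv hux.symm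
  have hxe : (1 - t) • u + t • y = x := by
    have h3 : t • (y - u) = x - u := by
      rw [hyu, smul_smul, ht, div_mul_cancel₀ _ hne, ← hxu]
    have h4 : (1 - t) • u + t • y = u + t • (y - u) := by module
    rw [h4, h3]; abel
  exact hBsc u hu y hy huy ⟨1 - t, t, by linarith, ht0, by ring, hxe⟩

set_option maxHeartbeats 1000000 in
lemma exists_interior_fiber {B : Set (EuclideanSpace ℝ (Fin (n+1)))}
    (hBconv : Convex ℝ B)
    {c : ((ℝ ∙ v)ᗮ : Submodule ℝ (EuclideanSpace ℝ (Fin (n+1))))}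
    (hc : c ∈ interior (pv v '' B)) (hBint : (interior B).Nonempty) :
    ∃ z ∈ interior B, pv v z = c := by
  obtain ⟨p, hp⟩ := hBint
  by_cases hpc : pv v p = c
  · exact ⟨p, hp, hpc⟩
  rw [mem_interior_iff_mem_nhds, Metric.mem_nhds_iff] at hc
  obtain ⟨ε, hε, hball⟩ := hc
  set d := c - pv v p with hd
  have hdne : d ≠ 0 := by
    intro h
    apply hpc
    have : c - pv v p = 0 := h
    rw [sub_eq_zero] at this; exact this.symm
  have hdnorm : 0 < ‖d‖ := norm_pos_iff.mpr hdne
  set s : ℝ := ε / (2 * ‖d‖) with hs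
  have hs0 : 0 < s := div_pos hε (by positivity)
  have hcc : c + s • d ∈ pv v '' B := by
    apply hball
    rw [mem_ball_iff_norm]
    have : c + s • d - c = s • d := by abel
    rw [this, norm_smul, Real.norm_eq_abs, abs_of_pos hs0, hs]
    rw [div_mul_eq_mul_div, mul_comm]
    rw [div_lt_iff₀ (by positivity)]
    nlinarith
  obtain ⟨y, hyB, hyc⟩ := hcc
  set t : ℝ := 1 / (1 + s) with htdef
  have hs1 : (0:ℝ) < 1 + s := by linarith
  have ht0 : 0 < t := by positivity
  have ht1 : t < 1 := by
    rw [htdef, div_lt_one hs1]; linarith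
  have hts : t * (1 + s) = 1 := by
    rw [htdef, one_div, inv_mul_cancel₀ hs1.ne']
  refine ⟨(1 - t) • p + t • y, ?_, ?_⟩
  · exact hBconv.combo_interior_self_mem_interior hp hyB (by linarith) (le_of_lt ht0) (by ring)
  · rw [map_add, map_smul, map_smul, hyc]
    have : (1 - t) • pv v p + t • (c + s • d) = c := by
      rw [hd]
      match_scalars <;> nlinarith [hts]
    exact this

lemma inner_add_smul_v (hv : ‖v‖ = 1) (z : EuclideanSpace ℝ (Fin (n+1))) (t : ℝ) :
    ⟪z + t • v, v⟫ = ⟪z, v⟫ + t := by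
  rw [inner_add_left, real_inner_smul_left, real_inner_self_eq_norm_sq, hv]; ring

lemma key_plus {B : Set (EuclideanSpace ℝ (Fin (n + 1)))}
    (hBc : IsCompact B) (hBsc : StrictlyConvexSet B) (hBint : (interior B).Nonempty)
    (hv : ‖v‖ = 1) {x : EuclideanSpace ℝ (Fin (n+1))} (hx : x ∈ Uplus B v) :
    ∃ δ > 0, ∀ x' ∈ frontier B, dist x' x < δ → x' ∈ Uplus B v := by
  have hBclosed : IsClosed B := hBc.isClosed
  have hBconv : Convex ℝ B := convex_of_strict hBsc
  obtain ⟨hxf, hxi, hxmax⟩ := hx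
  obtain ⟨z, hz, hzc⟩ := exists_interior_fiber hBconv hxi hBint
  rw [mem_interior_iff_mem_nhds, Metric.mem_nhds_iff] at hz
  obtain ⟨r, hr, hball⟩ := hz
  set m : ℝ := ⟪z, v⟫ with hm
  have hup : z + (r/2) • v ∈ B := by
    apply hball
    rw [mem_ball_iff_norm]
    have h1 : z + (r/2) • v - z = (r/2) • v := by abel
    rw [h1, norm_smul, Real.norm_eq_abs, abs_of_pos (by linarith), hv, mul_one]
    linarith
  have hup_pv : pv v (z + (r/2) • v) = pv v x := by
    rw [map_add, pv_smul_v, add_zero, hzc]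
  have hxm : m + r/2 ≤ ⟪x, v⟫ := by
    have := hxmax _ hup hup_pv
    rwa [inner_add_smul_v hv] at this
  have hnhds : interior (pv v '' B) ∈ nhds (pv v x) := isOpen_interior.mem_nhds hxi
  rw [Metric.mem_nhds_iff] at hnhds
  obtain ⟨ε, hε, hballε⟩ := hnhds
  refine ⟨min (r/2) ε, lt_min (by linarith) hε, ?_⟩
  intro x' hx'f hdist
  have hd1 : dist x' x < r/2 := lt_of_lt_of_le hdist (min_le_left _ _)
  have hd2 : dist x' x < ε := lt_of_lt_of_le hdist (min_le_right _ _)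
  rw [dist_eq_norm] at hd1 hd2
  have hpvlt : ‖pv v x' - pv v x‖ < min (r/2) ε := by
    have h1 : ‖pv v (x' - x)‖ ≤ ‖x' - x‖ := by
      have := ContinuousLinearMap.le_of_opNorm_le _
        (Submodule.orthogonalProjectionOnto_norm_le (K := (ℝ ∙ v)ᗮ)) (x' - x)
      rw [one_mul] at this
      exact this
    rw [map_sub] at h1
    calc ‖pv v x' - pv v x‖ ≤ ‖x' - x‖ := h1
      _ < min (r/2) ε := by rw [← dist_eq_norm]; exact hdist
  have hx'i : pv v x' ∈ interior (pv v '' B) := by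
    apply hballε
    rw [mem_ball_iff_norm]
    exact lt_of_lt_of_le hpvlt (min_le_right _ _)
  have hinner : |⟪x' - x, v⟫| ≤ ‖x' - x‖ := by
    have := abs_real_inner_le_norm (x' - x) v
    rwa [hv, mul_one] at this
  have hmlt : m < ⟪x', v⟫ := by
    rw [inner_sub_left] at hinner
    have := abs_le.mp hinner
    linarith [this.1]
  refine ⟨hx'f, hx'i, ?_⟩
  intro y hyB hypv
  by_contra hlt
  push_neg at hlt
  set u : EuclideanSpace ℝ (Fin (n+1)) :=
    z + ((pv v x' - pv v x : (ℝ ∙ v)ᗮ) : EuclideanSpace ℝ (Fin (n+1))) with hu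
  have huB : u ∈ B := by
    apply hball
    rw [mem_ball_iff_norm]
    have h1 : u - z = ((pv v x' - pv v x : (ℝ ∙ v)ᗮ) : EuclideanSpace ℝ (Fin (n+1))) := by
      rw [hu]; abel
    rw [h1]
    calc ‖((pv v x' - pv v x : (ℝ ∙ v)ᗮ) : EuclideanSpace ℝ (Fin (n+1)))‖
        = ‖pv v x' - pv v x‖ := rfl
      _ < min (r/2) ε := hpvlt
      _ ≤ r/2 := min_le_left _ _
      _ < r := by linarith
  have hu_pv : pv v u = pv v x' := by
    rw [hu, map_add, pv_coe, hzc]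
    abel
  have hu_inner : ⟪u, v⟫ = m := by
    rw [hu, inner_add_left, inner_orth_v, add_zero]
  have : x' ∈ interior B :=
    mem_interior_of_between hBsc hv huB hyB hu_pv hypv (by rw [hu_inner]; exact hmlt) hlt
  rw [hBclosed.frontier_eq] at hx'f
  exact hx'f.2 this

lemma key_minus {B : Set (EuclideanSpace ℝ (Fin (n + 1)))}
    (hBc : IsCompact B) (hBsc : StrictlyConvexSet B) (hBint : (interior B).Nonempty)
    (hv : ‖v‖ = 1) {x : EuclideanSpace ℝ (Fin (n+1))} (hx : x ∈ Uminus B v) :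
    ∃ δ > 0, ∀ x' ∈ frontier B, dist x' x < δ → x' ∈ Uminus B v := by
  have hBclosed : IsClosed B := hBc.isClosed
  have hBconv : Convex ℝ B := convex_of_strict hBsc
  obtain ⟨hxf, hxi, hxmin⟩ := hx
  obtain ⟨z, hz, hzc⟩ := exists_interior_fiber hBconv hxi hBint
  rw [mem_interior_iff_mem_nhds, Metric.mem_nhds_iff] at hz
  obtain ⟨r, hr, hball⟩ := hz
  set m : ℝ := ⟪z, v⟫ with hm
  have hup : z + (-(r/2)) • v ∈ B := by
    apply hball
    rw [mem_ball_iff_norm]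
    have h1 : z + (-(r/2)) • v - z = (-(r/2)) • v := by abel
    rw [h1, norm_smul, Real.norm_eq_abs, abs_neg, abs_of_pos (by linarith), hv, mul_one]
    linarith
  have hup_pv : pv v (z + (-(r/2)) • v) = pv v x := by
    rw [map_add, pv_smul_v, add_zero, hzc]
  have hxm : ⟪x, v⟫ ≤ m - r/2 := by
    have := hxmin _ hup hup_pv
    rw [inner_add_smul_v hv] at this
    linarith
  have hnhds : interior (pv v '' B) ∈ nhds (pv v x) := isOpen_interior.mem_nhds hxi
  rw [Metric.mem_nhds_iff] at hnhds
  obtain ⟨ε, hε, hballε⟩ := hnhds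
  refine ⟨min (r/2) ε, lt_min (by linarith) hε, ?_⟩
  intro x' hx'f hdist
  have hd1 : dist x' x < r/2 := lt_of_lt_of_le hdist (min_le_left _ _)
  have hd2 : dist x' x < ε := lt_of_lt_of_le hdist (min_le_right _ _)
  rw [dist_eq_norm] at hd1 hd2
  have hpvlt : ‖pv v x' - pv v x‖ < min (r/2) ε := by
    have h1 : ‖pv v (x' - x)‖ ≤ ‖x' - x‖ := by
      have := ContinuousLinearMap.le_of_opNorm_le _
        (Submodule.orthogonalProjectionOnto_norm_le (K := (ℝ ∙ v)ᗮ)) (x' - x)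
      rw [one_mul] at this
      exact this
    rw [map_sub] at h1
    calc ‖pv v x' - pv v x‖ ≤ ‖x' - x‖ := h1
      _ < min (r/2) ε := by rw [← dist_eq_norm]; exact hdist
  have hx'i : pv v x' ∈ interior (pv v '' B) := by
    apply hballε
    rw [mem_ball_iff_norm]
    exact lt_of_lt_of_le hpvlt (min_le_right _ _)
  have hinner : |⟪x' - x, v⟫| ≤ ‖x' - x‖ := by
    have := abs_real_inner_le_norm (x' - x) v
    rwa [hv, mul_one] at this
  have hmlt : ⟪x', v⟫ < m := by
    rw [inner_sub_left] at hinner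
    have := abs_le.mp hinner
    linarith [this.2]
  refine ⟨hx'f, hx'i, ?_⟩
  intro y hyB hypv
  by_contra hlt
  push_neg at hlt
  set u : EuclideanSpace ℝ (Fin (n+1)) :=
    z + ((pv v x' - pv v x : (ℝ ∙ v)ᗮ) : EuclideanSpace ℝ (Fin (n+1))) with hu
  have huB : u ∈ B := by
    apply hball
    rw [mem_ball_iff_norm]
    have h1 : u - z = ((pv v x' - pv v x : (ℝ ∙ v)ᗮ) : EuclideanSpace ℝ (Fin (n+1))) := by
      rw [hu]; abel
    rw [h1]
    calc ‖((pv v x' - pv v x : (ℝ ∙ v)ᗮ) : EuclideanSpace ℝ (Fin (n+1)))‖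
        = ‖pv v x' - pv v x‖ := rfl
      _ < min (r/2) ε := hpvlt
      _ ≤ r/2 := min_le_left _ _
      _ < r := by linarith
  have hu_pv : pv v u = pv v x' := by
    rw [hu, map_add, pv_coe, hzc]
    abel
  have hu_inner : ⟪u, v⟫ = m := by
    rw [hu, inner_add_left, inner_orth_v, add_zero]
  have : x' ∈ interior B :=
    mem_interior_of_between hBsc hv hyB huB hypv hu_pv hlt (by rw [hu_inner]; exact hmlt)
  rw [hBclosed.frontier_eq] at hx'f
  exact hx'f.2 this

end AuxStmt5

theorem stmt5 (n : ℕ) (B : Set (EuclideanSpace ℝ (Fin (n + 1))))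
    (hBc : IsCompact B) (hBsc : StrictlyConvexSet B) (hBint : (interior B).Nonempty)
    (v : EuclideanSpace ℝ (Fin (n + 1))) (hv : ‖v‖ = 1) :
    Disjoint (Uplus B v) (Uminus B v) ∧
      IsOpen (Subtype.val ⁻¹' (Uplus B v) : Set (frontier B)) ∧
      IsOpen (Subtype.val ⁻¹' (Uminus B v) : Set (frontier B)) := by
  have hBconv : Convex ℝ B := convex_of_strict hBsc
  refine ⟨?_, ?_, ?_⟩
  · rw [Set.disjoint_left]
    intro x hxp hxm
    obtain ⟨z, hz, hzc⟩ := exists_interior_fiber hBconv hxp.2.1 hBint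
    rw [mem_interior_iff_mem_nhds, Metric.mem_nhds_iff] at hz
    obtain ⟨r, hr, hball⟩ := hz
    have hmem : ∀ t : ℝ, |t| < r → z + t • v ∈ B := by
      intro t ht
      apply hball
      rw [mem_ball_iff_norm]
      have h1 : z + t • v - z = t • v := by abel
      rw [h1, norm_smul, Real.norm_eq_abs, hv, mul_one]
      exact ht
    have hpv : ∀ t : ℝ, pv v (z + t • v) = pv v x := by
      intro t
      rw [map_add, pv_smul_v, add_zero, hzc]
    have h1 := hxp.2.2 _ (hmem (r/2) (by rw [abs_of_pos (by linarith)]; linarith)) (hpv _)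
    have h2 := hxm.2.2 _ (hmem (-(r/2)) (by rw [abs_neg, abs_of_pos (by linarith)]; linarith))
      (hpv _)
    rw [inner_add_smul_v hv] at h1 h2
    linarith
  · rw [Metric.isOpen_iff]
    rintro ⟨x, hxS⟩ hx
    simp only [mem_preimage] at hx
    obtain ⟨δ, hδ, hkey⟩ := key_plus hBc hBsc hBint hv hx
    refine ⟨δ, hδ, ?_⟩
    rintro ⟨x', hx'S⟩ hd
    rw [mem_ball, Subtype.dist_eq] at hd
    exact hkey x' hx'S hd
  · rw [Metric.isOpen_iff]
    rintro ⟨x, hxS⟩ hx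
    simp only [mem_preimage] at hx
    obtain ⟨δ, hδ, hkey⟩ := key_minus hBc hBsc hBint hv hx
    refine ⟨δ, hδ, ?_⟩
    rintro ⟨x', hx'S⟩ hd
    rw [mem_ball, Subtype.dist_eq] at hd
    exact hkey x' hx'S hd
end

section
/- With B compact strictly convex with non-empty interior in ℝ^(n+1), v a unit vector, S = ∂B, and D_v^± := D_v^0 ∪ U_v^±, the restriction of the projection p_v to D_v^+ (and likewise D_v^-) is a homeomorphism onto p_v(B). -/
open Metric Set
open scoped RealInnerProductSpace

section Master

open Filter
open scoped Topology

variable {n : ℕ}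

lemma pv_apply_mem (v : EuclideanSpace ℝ (Fin (n+1))) (u : ↥((ℝ ∙ v)ᗮ)) (t : ℝ) :
    pv v ((u : EuclideanSpace ℝ (Fin (n+1))) + t • v) = u := by
  have h1 : pv v (u : EuclideanSpace ℝ (Fin (n+1))) = u :=
    Submodule.orthogonalProjectionOnto_mem_subspace_eq_self u
  have h2 : pv v v = 0 :=
    Submodule.orthogonalProjectionOnto_apply_of_mem_orthogonal
      (Submodule.le_orthogonal_orthogonal _ (Submodule.mem_span_singleton_self v))
  rw [map_add, map_smul, h1, h2, smul_zero, add_zero]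

lemma pv_decomp {v : EuclideanSpace ℝ (Fin (n+1))} (hv : ‖v‖ = 1)
    (x : EuclideanSpace ℝ (Fin (n+1))) :
    x = ((pv v x : EuclideanSpace ℝ (Fin (n+1))) + ⟪x, v⟫ • v) := by
  have := Submodule.starProjection_add_starProjection_orthogonal (K := ℝ ∙ v) x
  rw [Submodule.starProjection_unit_singleton (𝕜 := ℝ) hv x, Submodule.starProjection_apply] at this
  rw [real_inner_comm, pv]
  conv_lhs => rw [← this]
  abel

lemma inner_coe_v {v : EuclideanSpace ℝ (Fin (n+1))} (hv : ‖v‖ = 1)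
    (u : ↥((ℝ ∙ v)ᗮ)) (t : ℝ) :
    ⟪(u : EuclideanSpace ℝ (Fin (n+1))) + t • v, v⟫ = t := by
  have h0 : ⟪(u : EuclideanSpace ℝ (Fin (n+1))), v⟫ = 0 := by
    have h := u.2
    rw [Submodule.mem_orthogonal] at h
    have := h v (Submodule.mem_span_singleton_self v)
    rwa [real_inner_comm] at this
  rw [inner_add_left, h0, real_inner_smul_left, real_inner_self_eq_norm_sq, hv]
  ring

lemma pv_surj (v : EuclideanSpace ℝ (Fin (n+1))) : Function.Surjective (pv v) :=
  fun u => ⟨u, by simpa using pv_apply_mem v u 0⟩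

/-- The fiber of the projection over `u`, as a set of heights. -/
def fib (B : Set (EuclideanSpace ℝ (Fin (n+1)))) (v : EuclideanSpace ℝ (Fin (n+1)))
    (u : ↥((ℝ ∙ v)ᗮ)) : Set ℝ :=
  {t : ℝ | (u : EuclideanSpace ℝ (Fin (n+1))) + t • v ∈ B}

noncomputable def fsup (B : Set (EuclideanSpace ℝ (Fin (n+1))))
    (v : EuclideanSpace ℝ (Fin (n+1))) (u : ↥((ℝ ∙ v)ᗮ)) : ℝ :=
  sSup (fib B v u)

variable {B : Set (EuclideanSpace ℝ (Fin (n+1)))} {v : EuclideanSpace ℝ (Fin (n+1))}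

lemma convex_of_strict_s6 (hBsc : StrictlyConvexSet B) : Convex ℝ B := by
  have h : StrictConvex ℝ B := fun x hx y hy hxy a b ha hb hab =>
    hBsc x hx y hy hxy ⟨a, b, ha, hb, hab, rfl⟩
  exact h.convex

lemma inner_mem_fib (hv : ‖v‖ = 1) {y : EuclideanSpace ℝ (Fin (n+1))} (hy : y ∈ B) :
    ⟪y, v⟫ ∈ fib B v (pv v y) := by
  show ((pv v y : EuclideanSpace ℝ (Fin (n+1))) + ⟪y, v⟫ • v) ∈ B
  rw [← pv_decomp hv y]; exact hy

lemma fib_nonempty (hv : ‖v‖ = 1) {u : ↥((ℝ ∙ v)ᗮ)} (hu : u ∈ pv v '' B) :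
    (fib B v u).Nonempty := by
  obtain ⟨x, hxB, rfl⟩ := hu
  exact ⟨⟪x, v⟫, inner_mem_fib hv hxB⟩

lemma fib_isClosed (hBc : IsCompact B) (u : ↥((ℝ ∙ v)ᗮ)) : IsClosed (fib B v u) := by
  have : fib B v u = (fun t : ℝ => (u : EuclideanSpace ℝ (Fin (n+1))) + t • v) ⁻¹' B := rfl
  rw [this]
  exact hBc.isClosed.preimage (by fun_prop)

lemma fib_bddAbove (hv : ‖v‖ = 1) (hBc : IsCompact B) (u : ↥((ℝ ∙ v)ᗮ)) :
    BddAbove (fib B v u) := by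
  obtain ⟨R, hR⟩ := hBc.isBounded.subset_closedBall 0
  refine ⟨R, fun t ht => ?_⟩
  have h1 : |t| ≤ R := by
    rw [← inner_coe_v hv u t]
    calc |⟪(u : EuclideanSpace ℝ (Fin (n+1))) + t • v, v⟫|
        ≤ ‖(u : EuclideanSpace ℝ (Fin (n+1))) + t • v‖ * ‖v‖ := abs_real_inner_le_norm _ _
      _ ≤ R := by
          rw [hv, mul_one, ← dist_zero_right]
          exact hR ht
  exact le_trans (le_abs_self t) h1

lemma fsup_mem (hv : ‖v‖ = 1) (hBc : IsCompact B) {u : ↥((ℝ ∙ v)ᗮ)} (hu : u ∈ pv v '' B) :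
    fsup B v u ∈ fib B v u :=
  (fib_isClosed hBc u).csSup_mem (fib_nonempty hv hu) (fib_bddAbove hv hBc u)

lemma image_convex (hBsc : StrictlyConvexSet B) : Convex ℝ (pv v '' B) := by
  have := (convex_of_strict_s6 hBsc).linear_image
    ((pv v) : EuclideanSpace ℝ (Fin (n+1)) →ₗ[ℝ] ↥((ℝ ∙ v)ᗮ))
  simpa using this

lemma fsup_concave (hv : ‖v‖ = 1) (hBc : IsCompact B) (hBsc : StrictlyConvexSet B) :
    ConcaveOn ℝ (pv v '' B) (fsup B v) := by
  refine ⟨image_convex hBsc, ?_⟩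
  intro u1 h1 u2 h2 a b ha hb hab
  have m1 := fsup_mem hv hBc h1
  have m2 := fsup_mem hv hBc h2
  rw [smul_eq_mul, smul_eq_mul]
  refine le_csSup (fib_bddAbove hv hBc _) ?_
  show ((a • u1 + b • u2 : ↥((ℝ ∙ v)ᗮ)) : EuclideanSpace ℝ (Fin (n+1)))
      + (a * fsup B v u1 + b * fsup B v u2) • v ∈ B
  have key : ((a • u1 + b • u2 : ↥((ℝ ∙ v)ᗮ)) : EuclideanSpace ℝ (Fin (n+1)))
      + (a * fsup B v u1 + b * fsup B v u2) • v
      = a • ((u1 : EuclideanSpace ℝ (Fin (n+1))) + fsup B v u1 • v)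
        + b • ((u2 : EuclideanSpace ℝ (Fin (n+1))) + fsup B v u2 • v) := by
    push_cast
    module
  rw [key]
  exact convex_of_strict_s6 hBsc m1 m2 ha hb hab

lemma frontier_fiber_eq (hBsc : StrictlyConvexSet B)
    {u : ↥((ℝ ∙ v)ᗮ)} (hu : u ∈ frontier (pv v '' B)) :
    ∀ x ∈ B, pv v x = u → ∀ y ∈ B, pv v y = u → x = y := by
  intro x hx hpx y hy hpy
  by_contra hxy
  have hmid : (1/2 : ℝ) • x + (1/2 : ℝ) • y ∈ interior B :=
    hBsc x hx y hy hxy ⟨1/2, 1/2, by norm_num, by norm_num, by norm_num, rfl⟩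
  have hpvmid : pv v ((1/2 : ℝ) • x + (1/2 : ℝ) • y) = u := by
    rw [map_add, map_smul, map_smul, hpx, hpy, ← add_smul]
    norm_num
  have hop : IsOpen (pv v '' interior B) :=
    (ContinuousLinearMap.isOpenMap (pv v) (pv_surj v)) _ isOpen_interior
  have hmem : u ∈ interior (pv v '' B) :=
    interior_maximal (image_mono interior_subset) hop ⟨_, hmid, hpvmid⟩
  exact hu.2 hmem

lemma top_mem_frontier (hv : ‖v‖ = 1) (hBc : IsCompact B)
    {u : ↥((ℝ ∙ v)ᗮ)} (hu : u ∈ pv v '' B) :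
    (u : EuclideanSpace ℝ (Fin (n+1))) + fsup B v u • v ∈ frontier B := by
  have hxB : (u : EuclideanSpace ℝ (Fin (n+1))) + fsup B v u • v ∈ B := fsup_mem hv hBc hu
  rw [hBc.isClosed.frontier_eq]
  refine ⟨hxB, fun hint => ?_⟩
  obtain ⟨ε, hε, hball⟩ := Metric.mem_nhds_iff.mp (mem_interior_iff_mem_nhds.mp hint)
  have hmem : fsup B v u + ε/2 ∈ fib B v u := by
    show (u : EuclideanSpace ℝ (Fin (n+1))) + (fsup B v u + ε/2) • v ∈ B
    apply hball
    rw [mem_ball, dist_eq_norm]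
    have heq : ((u : EuclideanSpace ℝ (Fin (n+1))) + (fsup B v u + ε/2) • v)
        - ((u : EuclideanSpace ℝ (Fin (n+1))) + fsup B v u • v) = (ε/2) • v := by
      module
    rw [heq, norm_smul, hv, mul_one, Real.norm_eq_abs, abs_of_pos (by linarith)]
    linarith
  have h2 : fsup B v u + ε / 2 ≤ fsup B v u := le_csSup (fib_bddAbove hv hBc u) hmem
  linarith

lemma Dplus_subset (hBc : IsCompact B) : Dplus B v ⊆ B := by
  rintro x (hx | hx)
  · exact hx.1
  · exact hBc.isClosed.frontier_subset hx.1

lemma uplus_inner_eq (hv : ‖v‖ = 1) (hBc : IsCompact B)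
    {x : EuclideanSpace ℝ (Fin (n+1))} (hx : x ∈ Uplus B v) :
    ⟪x, v⟫ = fsup B v (pv v x) := by
  have hxB : x ∈ B := hBc.isClosed.frontier_subset hx.1
  have hu : pv v x ∈ pv v '' B := ⟨x, hxB, rfl⟩
  have h1 : ⟪x, v⟫ ≤ fsup B v (pv v x) :=
    le_csSup (fib_bddAbove hv hBc _) (inner_mem_fib hv hxB)
  have h2 : fsup B v (pv v x) ≤ ⟪x, v⟫ := by
    have hm : (pv v x : EuclideanSpace ℝ (Fin (n+1))) + fsup B v (pv v x) • v ∈ B :=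
      fsup_mem hv hBc hu
    have := hx.2.2 _ hm (pv_apply_mem v _ _)
    rwa [inner_coe_v hv] at this
  linarith

lemma isClosed_Dplus (hv : ‖v‖ = 1) (hBc : IsCompact B) (hBsc : StrictlyConvexSet B) :
    IsClosed (Dplus B v) := by
  apply isClosed_of_closure_subset
  intro x hx
  obtain ⟨s, hs, hlim⟩ := mem_closure_iff_seq_limit.mp hx
  have hxB : x ∈ B :=
    hBc.isClosed.mem_of_tendsto hlim (Eventually.of_forall fun k => Dplus_subset hBc (hs k))
  by_cases hfr : pv v x ∈ frontier (pv v '' B)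
  · exact Or.inl ⟨hxB, hfr⟩
  have hint : pv v x ∈ interior (pv v '' B) := by
    have h1 : pv v x ∈ closure (pv v '' B) := subset_closure ⟨x, hxB, rfl⟩
    rw [closure_eq_interior_union_frontier] at h1
    exact h1.resolve_right hfr
  have hplim : Tendsto (fun k => pv v (s k)) atTop (𝓝 (pv v x)) :=
    ((pv v).continuous.tendsto x).comp hlim
  have hev : ∀ᶠ k in atTop, s k ∈ Uplus B v := by
    filter_upwards [hplim.eventually_mem (isOpen_interior.mem_nhds hint)] with k hk
    rcases hs k with h | h
    · exact absurd hk h.2.2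
    · exact h
  refine Or.inr ⟨?_, hint, ?_⟩
  · exact isClosed_frontier.mem_of_tendsto hlim (hev.mono fun k hk => hk.1)
  · have hkey : ⟪x, v⟫ = fsup B v (pv v x) := by
      have t1 : Tendsto (fun k => ⟪s k, v⟫) atTop (𝓝 ⟪x, v⟫) :=
        ((continuous_inner.comp (continuous_id.prodMk continuous_const)).tendsto x).comp hlim
      have t2 : Tendsto (fun k => fsup B v (pv v (s k))) atTop (𝓝 (fsup B v (pv v x))) := by
        have hc : ContinuousAt (fsup B v) (pv v x) :=
          ((fsup_concave hv hBc hBsc).continuousOn_interior).continuousAt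
            (isOpen_interior.mem_nhds hint)
        exact (hc.tendsto).comp hplim
      exact tendsto_nhds_unique_of_eventuallyEq t1 t2
        (hev.mono fun k hk => uplus_inner_eq hv hBc hk)
    intro y hy hpy
    rw [pv_decomp hv x, inner_coe_v hv, hkey]
    calc ⟪y, v⟫ ≤ fsup B v (pv v y) :=
          le_csSup (fib_bddAbove hv hBc _) (inner_mem_fib hv hy)
      _ = fsup B v (pv v x) := by rw [hpy]

theorem master (hBc : IsCompact B) (hBsc : StrictlyConvexSet B)
    (hv : ‖v‖ = 1) :
    ∃ h : Dplus B v ≃ₜ (pv v '' B),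
      ∀ x : Dplus B v, (h x : ↥((ℝ ∙ v)ᗮ)) = pv v (x : EuclideanSpace ℝ (Fin (n + 1))) := by
  have hbij : Function.Bijective
      (fun x : Dplus B v => (⟨pv v x, ⟨x, Dplus_subset hBc x.2, rfl⟩⟩ : pv v '' B)) := by
    constructor
    · rintro ⟨x1, hx1⟩ ⟨x2, hx2⟩ h
      have hp : pv v x1 = pv v x2 := by simpa using congrArg Subtype.val h
      refine Subtype.ext ?_
      rcases hx1 with h1 | h1 <;> rcases hx2 with h2 | h2
      · exact frontier_fiber_eq hBsc h2.2 x1 h1.1 hp x2 h2.1 rfl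
      · have hf : pv v x1 ∈ interior (pv v '' B) := by rw [hp]; exact h2.2.1
        exact absurd hf h1.2.2
      · have hf : pv v x1 ∈ frontier (pv v '' B) := by rw [hp]; exact h2.2
        exact absurd h1.2.1 hf.2
      · have e1 := uplus_inner_eq hv hBc h1
        have e2 := uplus_inner_eq hv hBc h2
        have hi : ⟪x1, v⟫ = ⟪x2, v⟫ := by rw [e1, e2, hp]
        calc x1 = (pv v x1 : EuclideanSpace ℝ (Fin (n+1))) + ⟪x1, v⟫ • v := pv_decomp hv x1
          _ = (pv v x2 : EuclideanSpace ℝ (Fin (n+1))) + ⟪x2, v⟫ • v := by rw [hp, hi]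
          _ = x2 := (pv_decomp hv x2).symm
    · rintro ⟨u, hu⟩
      have hxB : (u : EuclideanSpace ℝ (Fin (n+1))) + fsup B v u • v ∈ B := fsup_mem hv hBc hu
      have hmemD : (u : EuclideanSpace ℝ (Fin (n+1))) + fsup B v u • v ∈ Dplus B v := by
        by_cases hfr : u ∈ frontier (pv v '' B)
        · exact Or.inl ⟨hxB, by rw [pv_apply_mem]; exact hfr⟩
        · have hint : u ∈ interior (pv v '' B) := by
            have h1 : u ∈ closure (pv v '' B) := subset_closure hu
            rw [closure_eq_interior_union_frontier] at h1
            exact h1.resolve_right hfr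
          refine Or.inr ⟨top_mem_frontier hv hBc hu, by rw [pv_apply_mem]; exact hint, ?_⟩
          intro y hy hpy
          rw [pv_apply_mem] at hpy
          rw [inner_coe_v hv]
          have := inner_mem_fib hv hy
          rw [hpy] at this
          exact le_csSup (fib_bddAbove hv hBc u) this
      exact ⟨⟨_, hmemD⟩, Subtype.ext (pv_apply_mem v u _)⟩
  let e : Dplus B v ≃ pv v '' B := Equiv.ofBijective _ hbij
  have hcompact : IsCompact (Dplus B v) :=
    hBc.of_isClosed_subset (isClosed_Dplus hv hBc hBsc) (Dplus_subset hBc)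
  haveI : CompactSpace (Dplus B v) := isCompact_iff_compactSpace.mp hcompact
  have hcont : Continuous e :=
    Continuous.subtype_mk ((pv v).continuous.comp continuous_subtype_val) _
  exact ⟨Continuous.homeoOfEquivCompactToT2 hcont, fun x => rfl⟩

end Master

section Minus

variable {n : ℕ} {B : Set (EuclideanSpace ℝ (Fin (n+1)))} {v : EuclideanSpace ℝ (Fin (n+1))}

lemma neg_interior' (S : Set (EuclideanSpace ℝ (Fin (n+1)))) :
    interior (-S) = -interior S := by
  have := (Homeomorph.neg (EuclideanSpace ℝ (Fin (n+1)))).preimage_interior S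
  simpa using this.symm

lemma neg_frontier' (S : Set (EuclideanSpace ℝ (Fin (n+1)))) :
    frontier (-S) = -frontier S := by
  have := (Homeomorph.neg (EuclideanSpace ℝ (Fin (n+1)))).preimage_frontier S
  simpa using this.symm

lemma negK_interior' (S : Set ↥((ℝ ∙ v)ᗮ)) : interior (-S) = -interior S := by
  have := (Homeomorph.neg ↥((ℝ ∙ v)ᗮ)).preimage_interior S
  simpa using this.symm

lemma negK_frontier' (S : Set ↥((ℝ ∙ v)ᗮ)) : frontier (-S) = -frontier S := by
  have := (Homeomorph.neg ↥((ℝ ∙ v)ᗮ)).preimage_frontier S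
  simpa using this.symm

lemma neg_strict (hBsc : StrictlyConvexSet B) : StrictlyConvexSet (-B) := by
  rintro x hx y hy hxy z hz
  obtain ⟨a, b, ha, hb, hab, rfl⟩ := hz
  have hxy' : -x ≠ -y := fun h => hxy (by simpa using congrArg Neg.neg h)
  have hm : a • (-x) + b • (-y) ∈ interior B :=
    hBsc (-x) hx (-y) hy hxy' ⟨a, b, ha, hb, hab, rfl⟩
  rw [neg_interior', Set.mem_neg]
  have : -(a • x + b • y) = a • (-x) + b • (-y) := by module
  rwa [this]

lemma pv_img_neg : pv v '' (-B) = -(pv v '' B) := by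
  ext u
  constructor
  · rintro ⟨x, hx, rfl⟩
    rw [Set.mem_neg]
    exact ⟨-x, hx, by rw [map_neg]⟩
  · intro hu
    rw [Set.mem_neg] at hu
    obtain ⟨x, hxB, hpx⟩ := hu
    exact ⟨-x, by rwa [Set.neg_mem_neg], by rw [map_neg, hpx, neg_neg]⟩

lemma mem_Dplus_neg_iff (x : EuclideanSpace ℝ (Fin (n+1))) :
    -x ∈ Dplus (-B) v ↔ x ∈ Dminus B v := by
  have e1 : frontier (pv v '' (-B)) = -frontier (pv v '' B) := by
    rw [pv_img_neg]; exact negK_frontier' _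
  have e2 : interior (pv v '' (-B)) = -interior (pv v '' B) := by
    rw [pv_img_neg]; exact negK_interior' _
  have e3 : frontier (-B) = -frontier B := neg_frontier' _
  constructor
  · rintro (⟨hxB, hfr⟩ | ⟨hfr, hint, hmax⟩)
    · left
      refine ⟨by simpa using hxB, ?_⟩
      rw [map_neg, e1] at hfr
      simpa using hfr
    · right
      rw [e3] at hfr
      rw [map_neg, e2] at hint
      refine ⟨by simpa using hfr, by simpa using hint, ?_⟩
      intro y hy hpy
      have := hmax (-y) (by simpa [Set.mem_neg] using hy)
        (by rw [map_neg, map_neg, hpy])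
      simpa using this
  · rintro (⟨hxB, hfr⟩ | ⟨hfr, hint, hmax⟩)
    · left
      refine ⟨by simpa using hxB, ?_⟩
      rw [map_neg, e1]
      simpa using hfr
    · refine Or.inr ⟨by rw [e3]; simpa using hfr,
        by rw [map_neg, e2]; simpa using hint, ?_⟩
      intro y hy hpy
      rw [Set.mem_neg] at hy
      have hpy' : pv v (-y) = pv v x := by
        rw [map_neg, hpy, map_neg, neg_neg]
      have := hmax (-y) hy hpy'
      rw [inner_neg_left] at this
      simp only [inner_neg_left]
      linarith

lemma Dplus_neg_eq : Dplus (-B) v = -(Dminus B v) := by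
  ext y
  rw [Set.mem_neg]
  have := mem_Dplus_neg_iff (B := B) (v := v) (-y)
  rwa [neg_neg] at this

end Minus

theorem stmt6 (n : ℕ) (B : Set (EuclideanSpace ℝ (Fin (n + 1))))
    (hBc : IsCompact B) (hBsc : StrictlyConvexSet B) (hBint : (interior B).Nonempty)
    (v : EuclideanSpace ℝ (Fin (n + 1))) (hv : ‖v‖ = 1) :
    (∃ h : Dplus B v ≃ₜ (pv v '' B),
      ∀ x : Dplus B v, (h x : ↥((ℝ ∙ v)ᗮ)) = pv v (x : EuclideanSpace ℝ (Fin (n + 1)))) ∧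
    (∃ h : Dminus B v ≃ₜ (pv v '' B),
      ∀ x : Dminus B v, (h x : ↥((ℝ ∙ v)ᗮ)) = pv v (x : EuclideanSpace ℝ (Fin (n + 1)))) := by
  constructor
  · exact master hBc hBsc hv
  · have hBc' : IsCompact (-B) := by
      rw [← Set.image_neg_eq_neg]
      exact hBc.image continuous_neg
    have hBsc' := neg_strict hBsc
    obtain ⟨h3, hspec⟩ := master (B := -B) (v := v) hBc' hBsc' hv
    have e1 : (Homeomorph.neg (EuclideanSpace ℝ (Fin (n+1)))) '' (Dminus B v)
        = Dplus (-B) v := by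
      rw [Dplus_neg_eq]
      simp [Set.image_neg_eq_neg]
    have e2 : (Homeomorph.neg ↥((ℝ ∙ v)ᗮ)) '' (pv v '' (-B)) = pv v '' B := by
      rw [pv_img_neg]
      simp [Set.image_neg_eq_neg]
    let g1 : ↥(Dminus B v) ≃ₜ ↥(Dplus (-B) v) :=
      ((Homeomorph.neg _).image (Dminus B v)).trans (Homeomorph.setCongr e1)
    let g2 : ↥(pv v '' (-B)) ≃ₜ ↥(pv v '' B) :=
      ((Homeomorph.neg _).image (pv v '' (-B))).trans (Homeomorph.setCongr e2)
    refine ⟨(g1.trans h3).trans g2, fun x => ?_⟩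
    have hv1 : ((g1 x : EuclideanSpace ℝ (Fin (n+1))))
        = -(x : EuclideanSpace ℝ (Fin (n+1))) := rfl
    calc (((g1.trans h3).trans g2) x : ↥((ℝ ∙ v)ᗮ))
        = -(h3 (g1 x) : ↥((ℝ ∙ v)ᗮ)) := rfl
      _ = -(pv v ((g1 x : EuclideanSpace ℝ (Fin (n+1))))) := by rw [hspec (g1 x)]
      _ = -(pv v (-(x : EuclideanSpace ℝ (Fin (n+1))))) := by rw [hv1]
      _ = pv v x := by rw [map_neg, neg_neg]
end

section
/- Let B ⊆ ℝ^(n+1) be compact strictly convex with non-empty interior, v₁,…,v_{n+1} an orthonormal basis, and I ⊆ {1,…,n+1} with |I| = k ≤ n. If x ∈ B and p_I(x) ∈ ∂(p_I(B)), then for every i ∈ I, p_i(x) ∈ ∂(p_i(B)). -/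
open Metric Set
open scoped RealInnerProductSpace

theorem stmt17 (n : ℕ) (B : Set (EuclideanSpace ℝ (Fin (n + 1))))
    (hBc : IsCompact B) (hBsc : StrictlyConvexSet B) (hBint : (interior B).Nonempty)
    (v : Fin (n + 1) → EuclideanSpace ℝ (Fin (n + 1))) (hv : Orthonormal ℝ v)
    (I : Finset (Fin (n + 1))) (hI : I.card ≤ n)
    (x : EuclideanSpace ℝ (Fin (n + 1))) (hx : x ∈ B)
    (hxI : Submodule.orthogonalProjectionOnto (Submodule.span ℝ (v '' ↑I))ᗮ x ∈
      frontier ((Submodule.orthogonalProjectionOnto (Submodule.span ℝ (v '' ↑I))ᗮ : EuclideanSpace ℝ (Fin (n + 1)) → _) '' B)) :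
    ∀ i ∈ I, pv (v i) x ∈ frontier (pv (v i) '' B) := by
  intro i hi
  set W : Submodule ℝ (EuclideanSpace ℝ (Fin (n + 1))) := (Submodule.span ℝ (v '' ↑I))ᗮ with hW
  set U : Submodule ℝ (EuclideanSpace ℝ (Fin (n + 1))) := (ℝ ∙ v i)ᗮ with hU
  have hWU : W ≤ U := by
    apply Submodule.orthogonal_le
    exact Submodule.span_le.2 (by
      rintro y hy
      rcases Set.mem_singleton_iff.1 hy with rfl
      exact Submodule.subset_span ⟨i, hi, rfl⟩)
  set q : ↥U →L[ℝ] ↥W := (Submodule.orthogonalProjectionOnto W).comp U.subtypeL with hq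
  have hcomp : ∀ y : EuclideanSpace ℝ (Fin (n + 1)),
      q (pv (v i) y) = Submodule.orthogonalProjectionOnto W y := fun y =>
    Submodule.orthogonalProjectionOnto_starProjection_of_le hWU y
  have hqsurj : Function.Surjective q := by
    intro w
    refine ⟨⟨(w : EuclideanSpace ℝ (Fin (n + 1))), hWU w.2⟩, ?_⟩
    simpa [q] using Submodule.orthogonalProjectionOnto_mem_subspace_eq_self w
  have hopen : IsOpenMap q := q.isOpenMap hqsurj
  have himg : q '' (pv (v i) '' B) =
      (Submodule.orthogonalProjectionOnto W : EuclideanSpace ℝ (Fin (n + 1)) → _) '' B := by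
    rw [Set.image_image]
    exact Set.image_congr fun y _ => hcomp y
  constructor
  · exact subset_closure ⟨x, hx, rfl⟩
  · intro hcontra
    have h1 : q (pv (v i) x) ∈ interior (q '' (pv (v i) '' B)) :=
      interior_maximal (Set.image_mono interior_subset)
        (hopen _ isOpen_interior) ⟨_, hcontra, rfl⟩
    rw [himg, hcomp] at h1
    exact hxI.2 h1
end
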